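/- arXiv:1806.09104 — 3 statements merged into one kernel-verified Lean document; each statement's English description precedes it below -/
import Mathlib

section
/- If P, Q are n×n positive definite matrices with P > Q (i.e., P − Q positive definite), then ‖P − Q‖ ≤ (e^{δ(P,Q)} − 1)‖Q‖, where ‖·‖ is the operator norm and δ the Riemannian distance. -/
/-- Singular values of a square real matrix, as square roots of the
eigenvalues of `Mᴴ * M`. -/
noncomputable def singVals {n : ℕ} (M : Matrix (Fin n) (Fin n) ℝ) : Fin n → ℝ :=
  fun k => Real.sqrt ((Matrix.isHermitian_conjTranspose_mul_self M).eigenvalues k)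

/-- The Riemannian distance `δ(P,Q) = sqrt (∑ k, log² σ_k (P Q⁻¹))`. -/
noncomputable def riem {n : ℕ} (P Q : Matrix (Fin n) (Fin n) ℝ) : ℝ :=
  Real.sqrt (∑ k, (Real.log (singVals (P * Q⁻¹) k)) ^ 2)

/-- Operator (spectral) norm of a real matrix. -/
noncomputable def opNorm {m n : ℕ} (A : Matrix (Fin m) (Fin n) ℝ) : ℝ :=
  ‖(Matrix.toEuclideanLin A).toContinuousLinearMap‖

namespace RiemAux
open Matrix
open scoped RealInnerProductSpace

variable {n : ℕ}

lemma transpose_eq_self {H : Matrix (Fin n) (Fin n) ℝ} (hH : H.IsHermitian) : Hᵀ = H := by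
  rw [← conjTranspose_eq_transpose_of_trivial, hH]

lemma dot_mulVec (N : Matrix (Fin n) (Fin n) ℝ) (a b : Fin n → ℝ) :
    a ⬝ᵥ (N *ᵥ b) = (Nᵀ *ᵥ a) ⬝ᵥ b := by
  rw [dotProduct_mulVec, ← mulVec_transpose]

lemma herm_dot_mulVec {H : Matrix (Fin n) (Fin n) ℝ} (hH : H.IsHermitian)
    (x y : Fin n → ℝ) : x ⬝ᵥ (H *ᵥ y) = (H *ᵥ x) ⬝ᵥ y := by
  rw [dot_mulVec, transpose_eq_self hH]

lemma mulVec_dot_mulVec (M : Matrix (Fin n) (Fin n) ℝ) (x y : Fin n → ℝ) :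
    (M *ᵥ x) ⬝ᵥ (M *ᵥ y) = x ⬝ᵥ ((Mᴴ * M) *ᵥ y) := by
  rw [← mulVec_mulVec, conjTranspose_eq_transpose_of_trivial]
  conv_rhs => rw [dot_mulVec, transpose_transpose]

lemma dot_self_nonneg (x : Fin n → ℝ) : 0 ≤ x ⬝ᵥ x :=
  Finset.sum_nonneg fun i _ => mul_self_nonneg (x i)

lemma dot_self_pos {x : Fin n → ℝ} (hx : x ≠ 0) : 0 < x ⬝ᵥ x := by
  obtain ⟨i, hi⟩ := Function.ne_iff.mp hx
  exact Finset.sum_pos' (fun i _ => mul_self_nonneg (x i))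
    ⟨i, Finset.mem_univ i, mul_self_pos.mpr hi⟩

section spectral
variable {H : Matrix (Fin n) (Fin n) ℝ} (hH : H.IsHermitian) (x : Fin n → ℝ)

lemma spec_real : H = (hH.eigenvectorUnitary : Matrix (Fin n) (Fin n) ℝ) *
    diagonal hH.eigenvalues * (hH.eigenvectorUnitary : Matrix (Fin n) (Fin n) ℝ)ᵀ := by
  have h := hH.spectral_theorem
  simpa [← conjTranspose_eq_transpose_of_trivial, star_eq_conjTranspose, Function.comp] using h

lemma UtU : (hH.eigenvectorUnitary : Matrix (Fin n) (Fin n) ℝ)ᵀ *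
    (hH.eigenvectorUnitary : Matrix (Fin n) (Fin n) ℝ) = 1 := by
  have := (Matrix.mem_unitaryGroup_iff').mp hH.eigenvectorUnitary.2
  simpa [star_eq_conjTranspose, conjTranspose_eq_transpose_of_trivial] using this

lemma UUt : (hH.eigenvectorUnitary : Matrix (Fin n) (Fin n) ℝ) *
    (hH.eigenvectorUnitary : Matrix (Fin n) (Fin n) ℝ)ᵀ = 1 := by
  have := (Matrix.mem_unitaryGroup_iff).mp hH.eigenvectorUnitary.2
  simpa [star_eq_conjTranspose, conjTranspose_eq_transpose_of_trivial] using this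

lemma normsq_eq : x ⬝ᵥ x =
    ∑ i, ((hH.eigenvectorUnitary : Matrix (Fin n) (Fin n) ℝ)ᵀ *ᵥ x) i ^ 2 := by
  set U := (hH.eigenvectorUnitary : Matrix (Fin n) (Fin n) ℝ)
  have h := mulVec_dot_mulVec Uᵀ x x
  rw [conjTranspose_eq_transpose_of_trivial, transpose_transpose, UUt hH, one_mulVec] at h
  rw [← h, dotProduct]
  simp [sq]

lemma quad_eq : x ⬝ᵥ (H *ᵥ x) = ∑ i, hH.eigenvalues i *
    ((hH.eigenvectorUnitary : Matrix (Fin n) (Fin n) ℝ)ᵀ *ᵥ x) i ^ 2 := by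
  set U := (hH.eigenvectorUnitary : Matrix (Fin n) (Fin n) ℝ)
  set y := Uᵀ *ᵥ x with hy
  conv_lhs => rw [spec_real hH, ← mulVec_mulVec, ← mulVec_mulVec, dot_mulVec, ← hy]
  rw [dotProduct]
  simp only [mulVec_diagonal]
  exact Finset.sum_congr rfl fun i _ => by ring

lemma mulVec_normsq_eq : (H *ᵥ x) ⬝ᵥ (H *ᵥ x) = ∑ i, hH.eigenvalues i ^ 2 *
    ((hH.eigenvectorUnitary : Matrix (Fin n) (Fin n) ℝ)ᵀ *ᵥ x) i ^ 2 := by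
  set U := (hH.eigenvectorUnitary : Matrix (Fin n) (Fin n) ℝ)
  set y := Uᵀ *ᵥ x with hy
  have hHx : H *ᵥ x = U *ᵥ (diagonal hH.eigenvalues *ᵥ y) := by
    conv_lhs => rw [spec_real hH, ← mulVec_mulVec, ← mulVec_mulVec, ← hy]
  rw [hHx, mulVec_dot_mulVec, conjTranspose_eq_transpose_of_trivial, UtU hH, one_mulVec,
    dotProduct]
  simp only [mulVec_diagonal]
  exact Finset.sum_congr rfl fun i _ => by ring

lemma quad_le {c : ℝ} (hc : ∀ i, hH.eigenvalues i ≤ c) :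
    x ⬝ᵥ (H *ᵥ x) ≤ c * (x ⬝ᵥ x) := by
  rw [quad_eq hH x, normsq_eq hH x, Finset.mul_sum]
  exact Finset.sum_le_sum fun i _ => mul_le_mul_of_nonneg_right (hc i) (sq_nonneg _)

end spectral

/-- dot product equals Euclidean norm squared. -/
lemma dot_self_eq_norm_sq (v : EuclideanSpace ℝ (Fin n)) : ⇑v ⬝ᵥ ⇑v = ‖v‖ ^ 2 := by
  rw [EuclideanSpace.norm_eq, Real.sq_sqrt (Finset.sum_nonneg fun i _ => sq_nonneg _)]
  simp [dotProduct, sq, Real.norm_eq_abs, abs_mul_abs_self]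

lemma inner_eq_dot (v w : EuclideanSpace ℝ (Fin n)) : ⟪v, w⟫ = ⇑v ⬝ᵥ ⇑w := by
  simp [PiLp.inner_apply, RCLike.inner_apply, dotProduct, mul_comm]

lemma toEuclideanCLM_apply_coe (M : Matrix (Fin n) (Fin n) ℝ)
    (v : EuclideanSpace ℝ (Fin n)) :
    ⇑((Matrix.toEuclideanLin M).toContinuousLinearMap v) = M *ᵥ ⇑v := rfl

lemma opNorm_le_of_eigen {H : Matrix (Fin n) (Fin n) ℝ} (hH : H.IsHermitian)
    {c : ℝ} (hc0 : 0 ≤ c) (hc : ∀ i, |hH.eigenvalues i| ≤ c) : opNorm H ≤ c := by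
  apply ContinuousLinearMap.opNorm_le_bound _ hc0
  intro x
  have h1 : ‖(Matrix.toEuclideanLin H).toContinuousLinearMap x‖ ^ 2 ≤ (c * ‖x‖) ^ 2 := by
    rw [← dot_self_eq_norm_sq, toEuclideanCLM_apply_coe, mulVec_normsq_eq hH]
    have h2 : (c * ‖x‖) ^ 2 = c ^ 2 * (⇑x ⬝ᵥ ⇑x) := by
      rw [dot_self_eq_norm_sq]; ring
    rw [h2, normsq_eq hH ⇑x, Finset.mul_sum]
    refine Finset.sum_le_sum fun i _ => mul_le_mul_of_nonneg_right ?_ (sq_nonneg _)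
    exact sq_le_sq' (neg_le_of_abs_le (hc i)) (le_of_abs_le (hc i))
  have := Real.sqrt_le_sqrt h1
  rwa [Real.sqrt_sq (norm_nonneg _), Real.sqrt_sq (by positivity)] at this

lemma quad_le_opNorm (M : Matrix (Fin n) (Fin n) ℝ) (x : Fin n → ℝ) :
    x ⬝ᵥ (M *ᵥ x) ≤ opNorm M * (x ⬝ᵥ x) := by
  set x' : EuclideanSpace ℝ (Fin n) := (WithLp.equiv 2 (Fin n → ℝ)).symm x with hx'
  have hco : ⇑x' = x := rfl
  have h1 : x ⬝ᵥ (M *ᵥ x) = ⟪x', (Matrix.toEuclideanLin M).toContinuousLinearMap x'⟫ := by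
    rw [inner_eq_dot, toEuclideanCLM_apply_coe, hco]
  rw [h1]
  calc ⟪x', (Matrix.toEuclideanLin M).toContinuousLinearMap x'⟫
      ≤ ‖x'‖ * ‖(Matrix.toEuclideanLin M).toContinuousLinearMap x'‖ := real_inner_le_norm _ _
    _ ≤ ‖x'‖ * (opNorm M * ‖x'‖) := by
        exact mul_le_mul_of_nonneg_left (ContinuousLinearMap.le_opNorm _ _) (norm_nonneg _)
    _ = opNorm M * (x ⬝ᵥ x) := by rw [← hco, dot_self_eq_norm_sq]; ring

end RiemAux

open Matrix RiemAux

theorem norm_sub_le_of_riem {n : ℕ} (P Q : Matrix (Fin n) (Fin n) ℝ)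
    (hP : P.PosDef) (hQ : Q.PosDef) (hPQ : (P - Q).PosDef) :
    opNorm (P - Q) ≤ (Real.exp (riem P Q) - 1) * opNorm Q := by
  rcases Nat.eq_zero_or_pos n with hn | hn
  · subst hn
    have h1 : riem P Q = 0 := by simp [riem]
    rw [h1, Real.exp_zero, sub_self, zero_mul]
    apply ContinuousLinearMap.opNorm_le_bound _ le_rfl
    intro x
    have hx0 : x = 0 := Subsingleton.elim x 0
    simp [hx0]
  -- main case
  open scoped MatrixOrder in set S := CFC.sqrt Q with hSdef
  have hS : S.PosSemidef := by
    open scoped MatrixOrder in exact Matrix.nonneg_iff_posSemidef.mp (CFC.sqrt_nonneg Q)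
  have hSH : S.IsHermitian := hS.1
  have hSS : S * S = Q := by
    open scoped MatrixOrder in exact CFC.sqrt_mul_sqrt_self Q hQ.posSemidef.nonneg
  have hdet : IsUnit S.det := by
    have h1 : S.det * S.det = Q.det := by rw [← det_mul, hSS]
    have h2 := hQ.det_pos
    refine isUnit_iff_ne_zero.mpr fun h => ?_
    rw [h, mul_zero] at h1
    exact absurd h1.symm (ne_of_gt h2)
  have hS1 : S * S⁻¹ = 1 := mul_nonsing_inv _ hdet
  have hS1' : S⁻¹ * S = 1 := nonsing_inv_mul _ hdet
  have hSiH : (S⁻¹).IsHermitian := hSH.inv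
  have hQinv : Q⁻¹ = S⁻¹ * S⁻¹ := by rw [← hSS, Matrix.mul_inv_rev]
  have hBps : (S⁻¹ * P * S⁻¹).PosSemidef := by
    have h := hP.posSemidef.mul_mul_conjTranspose_same S⁻¹
    rwa [hSiH.eq] at h
  have hBH : (S⁻¹ * P * S⁻¹).IsHermitian := hBps.1
  obtain ⟨j, -, hj⟩ := Finset.exists_max_image Finset.univ hBH.eigenvalues
    ⟨⟨0, hn⟩, Finset.mem_univ _⟩
  set lam := hBH.eigenvalues j with hlamdef
  set u : Fin n → ℝ := ⇑(hBH.eigenvectorBasis j) with hu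
  have hBu : (S⁻¹ * P * S⁻¹) *ᵥ u = lam • u := hBH.mulVec_eigenvectorBasis j
  have huu : u ⬝ᵥ u = 1 := by
    rw [hu, dot_self_eq_norm_sq, hBH.eigenvectorBasis.orthonormal.1 j, one_pow]
  have hune : u ≠ 0 := by
    intro h
    rw [h, zero_dotProduct] at huu
    exact zero_ne_one huu
  set v := S⁻¹ *ᵥ u with hv
  have hSv : S *ᵥ v = u := by rw [hv, mulVec_mulVec, hS1, one_mulVec]
  have hvne : v ≠ 0 := fun h => hune (by rw [← hSv, h, mulVec_zero])
  have hPv : u ⬝ᵥ ((S⁻¹ * P * S⁻¹) *ᵥ u) = v ⬝ᵥ (P *ᵥ v) := by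
    rw [← mulVec_mulVec, ← mulVec_mulVec, herm_dot_mulVec hSiH, ← hv]
  have hQv : u ⬝ᵥ u = v ⬝ᵥ (Q *ᵥ v) := by
    conv_lhs => rw [← hSv]
    rw [mulVec_dot_mulVec, hSH.eq, hSS]
  have hlam_eq : u ⬝ᵥ ((S⁻¹ * P * S⁻¹) *ᵥ u) = lam := by
    rw [hBu, dotProduct_smul, smul_eq_mul, huu, mul_one]
  have hlam_gt : 1 < lam := by
    have h2 : 0 < star v ⬝ᵥ ((P - Q) *ᵥ v) := hPQ.dotProduct_mulVec_pos hvne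
    rw [star_trivial, sub_mulVec, dotProduct_sub] at h2
    have h3 : v ⬝ᵥ (P *ᵥ v) = lam := by rw [← hPv, hlam_eq]
    have h4 : v ⬝ᵥ (Q *ᵥ v) = 1 := by rw [← hQv, huu]
    linarith
  -- eigenvector of P * Q⁻¹
  set w := S *ᵥ u with hw
  have hwv : S⁻¹ *ᵥ w = u := by rw [hw, mulVec_mulVec, hS1', one_mulVec]
  have hwne : w ≠ 0 := fun h => hune (by rw [← hwv, h, mulVec_zero])
  have hmat1 : P * Q⁻¹ * S = P * S⁻¹ := by
    rw [hQinv, mul_assoc P (S⁻¹ * S⁻¹) S, mul_assoc S⁻¹ S⁻¹ S, hS1', mul_one]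
  have hmat2 : S * (S⁻¹ * P * S⁻¹) = P * S⁻¹ := by
    rw [← mul_assoc, ← mul_assoc, hS1, one_mul]
  have hAw : (P * Q⁻¹) *ᵥ w = lam • w := by
    have h1 : (P * Q⁻¹) *ᵥ w = (P * S⁻¹) *ᵥ u := by
      rw [hw, mulVec_mulVec, hmat1]
    have h2 : lam • w = (P * S⁻¹) *ᵥ u := by
      rw [hw, ← mulVec_smul, ← hBu, mulVec_mulVec, hmat2]
    rw [h1, h2]
  have hww : 0 < w ⬝ᵥ w := dot_self_pos hwne
  obtain ⟨k, -, hk⟩ := Finset.exists_max_image Finset.univ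
    (Matrix.isHermitian_conjTranspose_mul_self (P * Q⁻¹)).eigenvalues ⟨j, Finset.mem_univ _⟩
  have h3 : lam ^ 2 * (w ⬝ᵥ w) = w ⬝ᵥ (((P * Q⁻¹)ᴴ * (P * Q⁻¹)) *ᵥ w) := by
    rw [← mulVec_dot_mulVec, hAw, dotProduct_smul, smul_dotProduct, smul_eq_mul,
      smul_eq_mul]
    ring
  have h4 := quad_le (Matrix.isHermitian_conjTranspose_mul_self (P * Q⁻¹)) w
    (fun i => hk i (Finset.mem_univ i))
  have hlam2 : lam ^ 2 ≤ (Matrix.isHermitian_conjTranspose_mul_self (P * Q⁻¹)).eigenvalues k :=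
    le_of_mul_le_mul_right (by rw [h3]; exact h4) hww
  have hlam_pos : (0 : ℝ) < lam := lt_trans one_pos hlam_gt
  have hsig : lam ≤ singVals (P * Q⁻¹) k := by
    rw [singVals, ← Real.sqrt_sq hlam_pos.le]
    exact Real.sqrt_le_sqrt hlam2
  have hsig1 : 1 < singVals (P * Q⁻¹) k := lt_of_lt_of_le hlam_gt hsig
  have hlogd : Real.log (singVals (P * Q⁻¹) k) ≤ riem P Q := by
    rw [riem]
    have h5 : Real.log (singVals (P * Q⁻¹) k) ^ 2 ≤
        ∑ i, Real.log (singVals (P * Q⁻¹) i) ^ 2 :=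
      Finset.single_le_sum (f := fun i => Real.log (singVals (P * Q⁻¹) i) ^ 2)
        (fun i _ => sq_nonneg _) (Finset.mem_univ k)
    calc Real.log (singVals (P * Q⁻¹) k)
        = Real.sqrt (Real.log (singVals (P * Q⁻¹) k) ^ 2) :=
          (Real.sqrt_sq (Real.log_nonneg hsig1.le)).symm
      _ ≤ _ := Real.sqrt_le_sqrt h5
  have hlam_exp : lam ≤ Real.exp (riem P Q) := by
    calc lam ≤ singVals (P * Q⁻¹) k := hsig
      _ = Real.exp (Real.log (singVals (P * Q⁻¹) k)) :=
          (Real.exp_log (lt_trans one_pos hsig1)).symm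
      _ ≤ Real.exp (riem P Q) := Real.exp_le_exp.mpr hlogd
  have hc1 : 1 < Real.exp (riem P Q) := lt_of_lt_of_le hlam_gt hlam_exp
  -- key quadratic inequality
  have key : ∀ x : Fin n → ℝ, x ⬝ᵥ ((P - Q) *ᵥ x) ≤
      (Real.exp (riem P Q) - 1) * (x ⬝ᵥ (Q *ᵥ x)) := by
    intro x
    have hmat3 : S⁻¹ * P * S⁻¹ * S = S⁻¹ * P := by
      rw [mul_assoc (S⁻¹ * P) S⁻¹ S, hS1', mul_one]
    have hSx : S⁻¹ *ᵥ (S *ᵥ x) = x := by rw [mulVec_mulVec, hS1', one_mulVec]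
    have e1 : x ⬝ᵥ (P *ᵥ x) = (S *ᵥ x) ⬝ᵥ ((S⁻¹ * P * S⁻¹) *ᵥ (S *ᵥ x)) := by
      conv_rhs => rw [mulVec_mulVec x (S⁻¹ * P * S⁻¹) S, hmat3, ← mulVec_mulVec,
        herm_dot_mulVec hSiH, hSx]
    have e2 : x ⬝ᵥ (Q *ᵥ x) = (S *ᵥ x) ⬝ᵥ (S *ᵥ x) := by
      rw [mulVec_dot_mulVec, hSH.eq, hSS]
    have e3 : (S *ᵥ x) ⬝ᵥ ((S⁻¹ * P * S⁻¹) *ᵥ (S *ᵥ x)) ≤ lam * ((S *ᵥ x) ⬝ᵥ (S *ᵥ x)) :=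
      quad_le hBH (S *ᵥ x) (fun i => hj i (Finset.mem_univ i))
    have e4 : 0 ≤ (S *ᵥ x) ⬝ᵥ (S *ᵥ x) := dot_self_nonneg _
    have e5 : lam * ((S *ᵥ x) ⬝ᵥ (S *ᵥ x)) ≤
        Real.exp (riem P Q) * ((S *ᵥ x) ⬝ᵥ (S *ᵥ x)) :=
      mul_le_mul_of_nonneg_right hlam_exp e4
    rw [sub_mulVec, dotProduct_sub, sub_mul, one_mul, e1, e2]
    exact sub_le_sub_right (le_trans e3 e5) _
  -- conclude via eigenvalues of P - Q
  have hDH : (P - Q).IsHermitian := hPQ.1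
  have hcQ : 0 ≤ (Real.exp (riem P Q) - 1) * opNorm Q := by
    have : (0:ℝ) ≤ opNorm Q := norm_nonneg _
    nlinarith
  apply opNorm_le_of_eigen hDH hcQ
  intro i
  rw [abs_of_nonneg (hPQ.posSemidef.eigenvalues_nonneg i)]
  set z : Fin n → ℝ := ⇑(hDH.eigenvectorBasis i) with hz
  have hzz : z ⬝ᵥ z = 1 := by
    rw [hz, dot_self_eq_norm_sq, hDH.eigenvectorBasis.orthonormal.1 i, one_pow]
  have hnu : z ⬝ᵥ ((P - Q) *ᵥ z) = hDH.eigenvalues i := by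
    rw [hDH.mulVec_eigenvectorBasis i, dotProduct_smul, smul_eq_mul, hzz, mul_one]
  have h6 : z ⬝ᵥ (Q *ᵥ z) ≤ opNorm Q := by
    have := quad_le_opNorm Q z
    rwa [hzz, mul_one] at this
  calc hDH.eigenvalues i = z ⬝ᵥ ((P - Q) *ᵥ z) := hnu.symm
    _ ≤ (Real.exp (riem P Q) - 1) * (z ⬝ᵥ (Q *ᵥ z)) := key z
    _ ≤ (Real.exp (riem P Q) - 1) * opNorm Q :=
        mul_le_mul_of_nonneg_left h6 (by linarith)
end

section
/- For positive definite matrices P, Q of size n×n, δ(P,Q) ≥ log‖PQ⁻¹‖, and consequently P ≤ e^{δ(P,Q)} Q. -/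
open Matrix in
theorem quadLe {n : ℕ} {A : Matrix (Fin n) (Fin n) ℝ} (hA : A.IsHermitian)
    {c : ℝ} (hc : ∀ k, hA.eigenvalues k ≤ c) (x : Fin n → ℝ) :
    x ⬝ᵥ A *ᵥ x ≤ c * (x ⬝ᵥ x) := by
  classical
  set U : Matrix (Fin n) (Fin n) ℝ := (hA.eigenvectorUnitary : Matrix (Fin n) (Fin n) ℝ) with hUdef
  have hstar : star U = Uᵀ := by
    ext i j; simp [Matrix.star_eq_conjTranspose, Matrix.conjTranspose_apply]
  set y : Fin n → ℝ := star U *ᵥ x with hy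
  have hUU : U * star U = 1 := Matrix.mem_unitaryGroup_iff.mp hA.eigenvectorUnitary.2
  have hxU : x ᵥ* U = y := by rw [hy, hstar, Matrix.mulVec_transpose]
  have key : x ⬝ᵥ A *ᵥ x = ∑ i, hA.eigenvalues i * (y i * y i) := by
    conv_lhs => rw [hA.spectral_theorem, Unitary.conjStarAlgAut_apply]
    rw [← Matrix.mulVec_mulVec, ← Matrix.mulVec_mulVec, Matrix.dotProduct_mulVec, hxU]
    simp [dotProduct, Matrix.mulVec_diagonal]
    exact Finset.sum_congr rfl fun i _ => by ring
  have key2 : x ⬝ᵥ x = ∑ i, y i * y i := by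
    have h2 : y ⬝ᵥ y = x ⬝ᵥ x := by
      rw [hy, hstar, Matrix.dotProduct_mulVec]
      have : (Uᵀ *ᵥ x) ᵥ* Uᵀ = (U * Uᵀ) *ᵥ x := by
        rw [← Matrix.mulVec_transpose, Matrix.transpose_transpose, Matrix.mulVec_mulVec]
      rw [this, ← hstar, hUU, Matrix.one_mulVec]
    rw [← h2]; rfl
  rw [key, key2, Finset.mul_sum]
  exact Finset.sum_le_sum fun i _ => mul_le_mul_of_nonneg_right (hc i) (mul_self_nonneg _)

open Matrix in
lemma dotH {n : ℕ} (M : Matrix (Fin n) (Fin n) ℝ) (u : Fin n → ℝ) :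
    u ⬝ᵥ (Mᴴ * M) *ᵥ u = (M *ᵥ u) ⬝ᵥ (M *ᵥ u) := by
  rw [← Matrix.mulVec_mulVec, Matrix.dotProduct_mulVec]
  congr 1
  rw [← Matrix.mulVec_transpose]
  congr 1

lemma sing_le_exp_riem {n : ℕ} (P Q : Matrix (Fin n) (Fin n) ℝ) (k : Fin n) :
    singVals (P * Q⁻¹) k ≤ Real.exp (riem P Q) := by
  have hσ : 0 ≤ singVals (P * Q⁻¹) k := Real.sqrt_nonneg _
  have hlog : Real.log (singVals (P * Q⁻¹) k) ≤ riem P Q := by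
    calc Real.log (singVals (P * Q⁻¹) k) ≤ |Real.log (singVals (P * Q⁻¹) k)| := le_abs_self _
    _ = Real.sqrt ((Real.log (singVals (P * Q⁻¹) k)) ^ 2) := (Real.sqrt_sq_eq_abs _).symm
    _ ≤ riem P Q := Real.sqrt_le_sqrt
        (Finset.single_le_sum (f := fun i => (Real.log (singVals (P * Q⁻¹) i)) ^ 2)
          (fun i _ => sq_nonneg _) (Finset.mem_univ k))
  rcases hσ.eq_or_lt with h | h
  · exact le_trans h.symm.le (Real.exp_pos _).le
  · calc singVals (P * Q⁻¹) k = Real.exp (Real.log (singVals (P * Q⁻¹) k)) :=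
        (Real.exp_log h).symm
    _ ≤ Real.exp (riem P Q) := Real.exp_le_exp.mpr hlog

open Matrix in
lemma eig_le {n : ℕ} (P Q : Matrix (Fin n) (Fin n) ℝ) (k : Fin n) :
    (Matrix.isHermitian_conjTranspose_mul_self (P * Q⁻¹)).eigenvalues k
      ≤ (Real.exp (riem P Q)) ^ 2 := by
  have h0 : 0 ≤ (Matrix.isHermitian_conjTranspose_mul_self (P * Q⁻¹)).eigenvalues k :=
    (Matrix.posSemidef_conjTranspose_mul_self (P * Q⁻¹)).eigenvalues_nonneg k
  have : (Matrix.isHermitian_conjTranspose_mul_self (P * Q⁻¹)).eigenvalues k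
      = (singVals (P * Q⁻¹) k) ^ 2 := (Real.sq_sqrt h0).symm
  rw [this]
  exact pow_le_pow_left₀ (Real.sqrt_nonneg _) (sing_le_exp_riem P Q k) 2

open Matrix in
lemma opNorm_le_exp_riem {n : ℕ} (P Q : Matrix (Fin n) (Fin n) ℝ) :
    opNorm (P * Q⁻¹) ≤ Real.exp (riem P Q) := by
  set M := P * Q⁻¹ with hM
  show ‖(Matrix.toEuclideanLin M).toContinuousLinearMap‖ ≤ _
  apply ContinuousLinearMap.opNorm_le_bound _ (Real.exp_pos _).le
  intro x
  set x' : Fin n → ℝ := WithLp.equiv 2 (Fin n → ℝ) x with hx'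
  have happ : (Matrix.toEuclideanLin M).toContinuousLinearMap x
      = (WithLp.equiv 2 (Fin n → ℝ)).symm (M *ᵥ x') := rfl
  have hnx : ‖x‖ ^ 2 = x' ⬝ᵥ x' := by
    rw [← real_inner_self_eq_norm_sq, EuclideanSpace.inner_eq_star_dotProduct]
    rw [star_trivial]
    rfl
  have hsq : ‖(Matrix.toEuclideanLin M).toContinuousLinearMap x‖ ^ 2
      ≤ (Real.exp (riem P Q) * ‖x‖) ^ 2 := by
    rw [← real_inner_self_eq_norm_sq, EuclideanSpace.inner_eq_star_dotProduct, happ]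
    have h1 : ((WithLp.equiv 2 (Fin n → ℝ)).symm (M *ᵥ x')).ofLp
        ⬝ᵥ star ((WithLp.equiv 2 (Fin n → ℝ)).symm (M *ᵥ x')).ofLp
        = (M *ᵥ x') ⬝ᵥ (M *ᵥ x') := by simp
    rw [h1, ← dotH, mul_pow]
    calc x' ⬝ᵥ (Mᴴ * M) *ᵥ x' ≤ (Real.exp (riem P Q)) ^ 2 * (x' ⬝ᵥ x') :=
          quadLe (Matrix.isHermitian_conjTranspose_mul_self M) (eig_le P Q) x'
    _ = (Real.exp (riem P Q)) ^ 2 * ‖x‖ ^ 2 := by rw [hnx]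
  have := Real.sqrt_le_sqrt hsq
  rwa [Real.sqrt_sq (norm_nonneg _), Real.sqrt_sq (by positivity)] at this

open Matrix in
theorem riem_ge_log_opNorm {n : ℕ} (P Q : Matrix (Fin n) (Fin n) ℝ)
    (hP : P.PosDef) (hQ : Q.PosDef) :
    Real.log (opNorm (P * Q⁻¹)) ≤ riem P Q ∧
      (Real.exp (riem P Q) • Q - P).PosSemidef := by
  have hriem0 : 0 ≤ riem P Q := Real.sqrt_nonneg _
  constructor
  · have hb : opNorm (P * Q⁻¹) ≤ Real.exp (riem P Q) := opNorm_le_exp_riem P Q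
    have h0 : 0 ≤ opNorm (P * Q⁻¹) := norm_nonneg _
    rcases h0.eq_or_lt with h | h
    · rw [← h, Real.log_zero]; exact hriem0
    · have := Real.log_le_log h hb
      rwa [Real.log_exp] at this
  · set c := Real.exp (riem P Q) with hc
    have hcpos : 0 < c := Real.exp_pos _
    set R := (open scoped MatrixOrder in CFC.sqrt Q) with hRdef
    have hR : R * R = Q := open scoped MatrixOrder in CFC.sqrt_mul_sqrt_self Q hQ.posSemidef.nonneg
    have hRH : R.IsHermitian := open scoped MatrixOrder in (CFC.sqrt_nonneg Q).posSemidef.1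
    have hRdet : IsUnit R.det := by
      rw [isUnit_iff_ne_zero]
      intro h
      have hdet : R.det * R.det = Q.det := by rw [← Matrix.det_mul, hR]
      rw [h, mul_zero] at hdet
      exact hQ.det_pos.ne hdet
    have hRR : R⁻¹ * R = 1 := Matrix.nonsing_inv_mul R hRdet
    have hRR' : R * R⁻¹ = 1 := Matrix.mul_nonsing_inv R hRdet
    have hRinvH : R⁻¹.IsHermitian := hRH.inv
    have hRT : Rᵀ = R := by
      have := hRH.eq
      rwa [Matrix.conjTranspose] at this
      -- over ℝ conjTranspose = transpose since star = id
    set S := R⁻¹ * P * R⁻¹ with hSdef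
    have hS : S.IsHermitian := by
      unfold Matrix.IsHermitian
      rw [hSdef, Matrix.conjTranspose_mul, Matrix.conjTranspose_mul, hP.1.eq, hRinvH.eq,
        mul_assoc]
    have hSeig : ∀ k, hS.eigenvalues k ≤ c := by
      intro k
      set ν := hS.eigenvalues k with hν
      set v : Fin n → ℝ := ⇑(hS.eigenvectorBasis k) with hv
      have hvS : S *ᵥ v = ν • v := hS.mulVec_eigenvectorBasis k
      have hvne : v ≠ 0 := by
        intro h
        apply hS.eigenvectorBasis.orthonormal.ne_zero k
        ext i
        exact congrFun h i
      set u : Fin n → ℝ := R *ᵥ v with hu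
      have huv : R⁻¹ *ᵥ u = v := by
        rw [hu, Matrix.mulVec_mulVec, hRR, Matrix.one_mulVec]
      have hune : u ≠ 0 := by
        intro h
        rw [h, Matrix.mulVec_zero] at huv
        exact hvne huv.symm
      have hMu : (P * Q⁻¹) *ᵥ u = ν • u := by
        have hQinv : Q⁻¹ = R⁻¹ * R⁻¹ := by rw [← hR, Matrix.mul_inv_rev]
        have l1 : (P * Q⁻¹) *ᵥ u = (P * R⁻¹) *ᵥ v := by
          rw [hu, Matrix.mulVec_mulVec, hQinv, mul_assoc, mul_assoc, hRR, mul_one]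
        have l2 : R *ᵥ (S *ᵥ v) = (P * R⁻¹) *ᵥ v := by
          rw [Matrix.mulVec_mulVec, hSdef, ← mul_assoc, ← mul_assoc, hRR', one_mul]
        rw [l1, ← l2, hvS, Matrix.mulVec_smul, ← hu]
      have h1 : u ⬝ᵥ ((P * Q⁻¹)ᴴ * (P * Q⁻¹)) *ᵥ u = ν ^ 2 * (u ⬝ᵥ u) := by
        rw [dotH, hMu, smul_dotProduct, dotProduct_smul]
        simp [smul_eq_mul]; ring
      have h2 : u ⬝ᵥ ((P * Q⁻¹)ᴴ * (P * Q⁻¹)) *ᵥ u ≤ c ^ 2 * (u ⬝ᵥ u) :=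
        quadLe (Matrix.isHermitian_conjTranspose_mul_self (P * Q⁻¹)) (eig_le P Q) u
      have hupos : 0 < u ⬝ᵥ u := by
        rcases (Finset.sum_nonneg fun i _ => mul_self_nonneg (u i) :
            (0:ℝ) ≤ u ⬝ᵥ u).eq_or_lt with h | h
        · exact absurd (dotProduct_self_eq_zero.mp h.symm) hune
        · exact h
      have hν2 : ν ^ 2 ≤ c ^ 2 := by
        rw [h1] at h2
        exact le_of_mul_le_mul_right (by linarith) hupos
      calc ν ≤ |ν| := le_abs_self _
        _ = Real.sqrt (ν ^ 2) := (Real.sqrt_sq_eq_abs _).symm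
        _ ≤ Real.sqrt (c ^ 2) := Real.sqrt_le_sqrt hν2
        _ = c := Real.sqrt_sq hcpos.le
    have hquad : ∀ x : Fin n → ℝ, x ⬝ᵥ P *ᵥ x ≤ c * (x ⬝ᵥ Q *ᵥ x) := by
      intro x
      have hP' : P = R * S * R := by
        rw [hSdef, ← mul_assoc, ← mul_assoc, hRR', one_mul, mul_assoc, hRR, mul_one]
      have hconj : x ᵥ* R = R *ᵥ x := by rw [← Matrix.mulVec_transpose, hRT]
      have hxP : x ⬝ᵥ P *ᵥ x = (R *ᵥ x) ⬝ᵥ S *ᵥ (R *ᵥ x) := by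
        conv_lhs => rw [hP']
        rw [← Matrix.mulVec_mulVec, ← Matrix.mulVec_mulVec, Matrix.dotProduct_mulVec, hconj]
      have hxQ : x ⬝ᵥ Q *ᵥ x = (R *ᵥ x) ⬝ᵥ (R *ᵥ x) := by
        conv_lhs => rw [← hR]
        rw [← Matrix.mulVec_mulVec, Matrix.dotProduct_mulVec, hconj]
      rw [hxP, hxQ]
      exact quadLe hS hSeig _
    refine Matrix.posSemidef_iff_dotProduct_mulVec.mpr ⟨?_, ?_⟩
    · show (c • Q - P)ᴴ = _
      rw [Matrix.conjTranspose_sub, Matrix.conjTranspose_smul, hQ.1.eq, hP.1.eq, star_trivial]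
    · intro x
      rw [star_trivial]
      rw [Matrix.sub_mulVec, dotProduct_sub, Matrix.smul_mulVec,
        dotProduct_smul]
      have := hquad x
      simp only [smul_eq_mul]
      linarith
end

section
/- Define recursively Γ_N(N) = Q_{NN} and Γ_k(N) = Q_{kk} − Q_{k,k+1} Γ_{k+1}(N)⁻¹ Q_{k+1,k} for k < N, where Q is a symmetric positive definite block-tridiagonal matrix with q̲ I ≤ Q ≤ q̄ I. Then q̲ I ≤ Γ_k(N) ≤ q̄ I for all 1 ≤ k ≤ N. -/
open Matrix

def blk {N d : ℕ} (A : Matrix (Fin N × Fin d) (Fin N × Fin d) ℝ) (i j : Fin N) :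
    Matrix (Fin d) (Fin d) ℝ :=
  Matrix.of fun a b => A (i, a) (j, b)

namespace GammaAux

variable {N d : ℕ}

/-- Embed a `d`-vector at block `k`. -/
def eblk (k : Fin N) (u : Fin d → ℝ) : Fin N × Fin d → ℝ :=
  fun p => if p.1 = k then u p.2 else 0

lemma dot_expand (w v : Fin N × Fin d → ℝ) :
    w ⬝ᵥ v = ∑ j : Fin N, ∑ a : Fin d, w (j, a) * v (j, a) := by
  simp [dotProduct, Fintype.sum_prod_type]

lemma mulVec_expand (Q : Matrix (Fin N × Fin d) (Fin N × Fin d) ℝ)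
    (w : Fin N × Fin d → ℝ) (j : Fin N) (a : Fin d) :
    (Q *ᵥ w) (j, a) = ∑ l : Fin N, (blk Q j l *ᵥ fun b => w (l, b)) a := by
  simp [mulVec, dotProduct, blk, Fintype.sum_prod_type]

lemma mulVec_eblk (Q : Matrix (Fin N × Fin d) (Fin N × Fin d) ℝ)
    (k j : Fin N) (u : Fin d → ℝ) (a : Fin d) :
    (Q *ᵥ eblk k u) (j, a) = (blk Q j k *ᵥ u) a := by
  rw [mulVec_expand]
  rw [Fintype.sum_eq_single k]
  · congr 1
    funext b
    simp [eblk]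
  · intro l hl
    have hz : (fun b => eblk k u (l, b)) = (fun _ => (0:ℝ)) := funext fun b => by
      simp [eblk, hl]
    rw [hz]
    simp [mulVec, dotProduct]

lemma blk_smul_one (c : ℝ) (k : Fin N) :
    blk (c • (1 : Matrix (Fin N × Fin d) (Fin N × Fin d) ℝ)) k k
      = c • (1 : Matrix (Fin d) (Fin d) ℝ) := by
  ext a b
  by_cases h : a = b <;> simp [blk, one_apply, Prod.ext_iff, h]

lemma blk_sub (A B : Matrix (Fin N × Fin d) (Fin N × Fin d) ℝ) (i j : Fin N) :
    blk (A - B) i j = blk A i j - blk B i j := by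
  ext a b; simp [blk]

lemma blk_conjT {Q : Matrix (Fin N × Fin d) (Fin N × Fin d) ℝ}
    (hQ : Q.IsHermitian) (i j : Fin N) : (blk Q i j)ᴴ = blk Q j i := by
  ext a b
  simpa [blk, conjTranspose_apply] using hQ.apply (j, a) (i, b)

lemma blk_posSemidef {Q : Matrix (Fin N × Fin d) (Fin N × Fin d) ℝ}
    (hQ : Q.PosSemidef) (k : Fin N) : (blk Q k k).PosSemidef := by
  have : blk Q k k = Q.submatrix (fun a : Fin d => (k, a)) (fun a : Fin d => (k, a)) := by
    ext a b; simp [blk]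
  rw [this]
  exact hQ.submatrix _

lemma smul_one_posDef {c : ℝ} (hc : 0 < c) :
    (c • (1 : Matrix (Fin d) (Fin d) ℝ)).PosDef := by
  have h1 : (1 : Matrix (Fin d) (Fin d) ℝ).PosDef := Matrix.PosDef.one
  refine Matrix.PosDef.of_dotProduct_mulVec_pos ?_ fun x hx => ?_
  · simp [Matrix.IsHermitian, conjTranspose_smul]
  · rw [smul_mulVec, one_mulVec]
    have hxx : 0 < x ⬝ᵥ x := by
      obtain ⟨i, hi⟩ := Function.ne_iff.mp hx
      have : (0:ℝ) < ∑ j, x j * x j :=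
        Finset.sum_pos' (fun j _ => mul_self_nonneg (x j))
          ⟨i, Finset.mem_univ i, mul_self_pos.mpr hi⟩
      simpa [dotProduct] using this
    calc (0:ℝ) < c * (x ⬝ᵥ x) := by positivity
    _ = star x ⬝ᵥ c • x := by simp [dotProduct_smul]


lemma lower_of_schur {N d : ℕ} {Q : Matrix (Fin N × Fin d) (Fin N × Fin d) ℝ}
    {qlow : ℝ} (h0 : 0 < qlow)
    (hlower : (Q - qlow • (1 : Matrix (Fin N × Fin d) (Fin N × Fin d) ℝ)).PosSemidef)
    {Gk : Matrix (Fin d) (Fin d) ℝ} (hherm : Gk.IsHermitian) (k : Fin N)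
    (hw : ∀ u : Fin d → ℝ, ∃ w : Fin N × Fin d → ℝ,
      (∀ p : Fin N × Fin d, p.1 ≠ k → w p = 0 ∨ (Q *ᵥ w) p = 0) ∧
      (∀ a, w (k, a) = u a) ∧
      (∀ a, (Q *ᵥ w) (k, a) = (Gk *ᵥ u) a)) :
    (Gk - qlow • (1 : Matrix (Fin d) (Fin d) ℝ)).PosSemidef := by
  refine Matrix.PosSemidef.of_dotProduct_mulVec_nonneg ?_ ?_
  · exact hherm.sub (by simp [Matrix.IsHermitian])
  · intro u
    obtain ⟨w, hoff, hwk, hQk⟩ := hw u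
    have hq : u ⬝ᵥ (Gk *ᵥ u) = w ⬝ᵥ (Q *ᵥ w) := by
      have h1 : w ⬝ᵥ (Q *ᵥ w) = ∑ a, w (k, a) * (Q *ᵥ w) (k, a) := by
        rw [dot_expand]
        refine Fintype.sum_eq_single k (fun j hj => Finset.sum_eq_zero fun a _ => ?_)
        rcases hoff (j, a) hj with h | h <;> simp [h]
      have h2 : u ⬝ᵥ (Gk *ᵥ u) = ∑ a, w (k, a) * (Q *ᵥ w) (k, a) := by
        rw [dotProduct]
        exact Finset.sum_congr rfl fun a _ => by rw [hwk, hQk]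
      rw [h1, h2]
    have hlow2 : qlow * (w ⬝ᵥ w) ≤ w ⬝ᵥ (Q *ᵥ w) := by
      have h := hlower.dotProduct_mulVec_nonneg w
      rw [sub_mulVec, dotProduct_sub, smul_mulVec, one_mulVec,
        dotProduct_smul] at h
      simp only [star_trivial, smul_eq_mul] at h
      linarith
    have hww : u ⬝ᵥ u ≤ w ⬝ᵥ w := by
      have h1 : u ⬝ᵥ u = ∑ a, w (k, a) * w (k, a) := by
        rw [dotProduct]
        exact Finset.sum_congr rfl fun a _ => by rw [hwk]
      rw [h1, dot_expand]
      exact Finset.single_le_sum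
        (f := fun j => ∑ a, w (j, a) * w (j, a))
        (fun j _ => Finset.sum_nonneg fun a _ => mul_self_nonneg _)
        (Finset.mem_univ k)
    rw [sub_mulVec, dotProduct_sub, smul_mulVec, one_mulVec, dotProduct_smul]
    simp only [star_trivial, smul_eq_mul]
    have h3 : qlow * (u ⬝ᵥ u) ≤ qlow * (w ⬝ᵥ w) :=
      mul_le_mul_of_nonneg_left hww h0.le
    linarith

lemma two_le_abs_sub {a b : ℤ} (h : a + 2 ≤ b ∨ b + 2 ≤ a) : 2 ≤ |a - b| := by
  rcases h with h | h
  · exact le_abs.mpr (Or.inr (by omega))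
  · exact le_abs.mpr (Or.inl (by omega))

end GammaAux

open GammaAux in
/-- The backward Schur-complement recursion `Γ_N = Q_{NN}`,
`Γ_k = Q_{kk} − Q_{k,k+1} Γ_{k+1}⁻¹ Q_{k+1,k}` for a block-tridiagonal symmetric
positive definite matrix with `q̲ I ≤ Q ≤ q̄ I` stays within the same bounds:
`q̲ I ≤ Γ_k ≤ q̄ I`. -/
theorem gamma_recursion_bounds {N d : ℕ} (hN : 0 < N)
    (Q : Matrix (Fin N × Fin d) (Fin N × Fin d) ℝ) (hQ : Q.PosDef)
    (hsymm : Q.IsHermitian)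
    (htri : ∀ i j : Fin N, 2 ≤ |(i : ℤ) - (j : ℤ)| → blk Q i j = 0)
    (qlow qhigh : ℝ) (h0 : 0 < qlow) (hle : qlow ≤ qhigh)
    (hlower : (Q - qlow • (1 : Matrix (Fin N × Fin d) (Fin N × Fin d) ℝ)).PosSemidef)
    (hupper : ((qhigh • (1 : Matrix (Fin N × Fin d) (Fin N × Fin d) ℝ)) - Q).PosSemidef)
    (G : ℕ → Matrix (Fin d) (Fin d) ℝ)
    (hGtop : G (N - 1) = blk Q ⟨N - 1, by omega⟩ ⟨N - 1, by omega⟩)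
    (hGrec : ∀ k (hk : k + 1 < N),
      G k = blk Q ⟨k, by omega⟩ ⟨k, by omega⟩ -
        blk Q ⟨k, by omega⟩ ⟨k + 1, hk⟩ * (G (k + 1))⁻¹ *
          blk Q ⟨k + 1, hk⟩ ⟨k, by omega⟩) :
    ∀ k, k < N →
      (G k - qlow • (1 : Matrix (Fin d) (Fin d) ℝ)).PosSemidef ∧
        ((qhigh • (1 : Matrix (Fin d) (Fin d) ℝ)) - G k).PosSemidef := by
  have key : ∀ m : ℕ, ∀ k : ℕ, ∀ hk : k < N, N - 1 - k = m →
      (G k).IsHermitian ∧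
      (∀ u : Fin d → ℝ, ∃ w : Fin N × Fin d → ℝ,
        (∀ p : Fin N × Fin d, (p.1 : ℕ) < k → w p = 0) ∧
        (∀ a, w (⟨k, hk⟩, a) = u a) ∧
        (∀ p : Fin N × Fin d, k < (p.1 : ℕ) → (Q *ᵥ w) p = 0) ∧
        (∀ a, (Q *ᵥ w) (⟨k, hk⟩, a) = (G k *ᵥ u) a)) ∧
      (qhigh • (1 : Matrix (Fin d) (Fin d) ℝ) - G k).PosSemidef ∧
      (G k - qlow • (1 : Matrix (Fin d) (Fin d) ℝ)).PosSemidef ∧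
      (G k).PosDef := by
    intro m
    induction m with
    | zero =>
      intro k hk hm
      have hkN : k = N - 1 := by omega
      subst hkN
      have hG : G (N - 1) = blk Q ⟨N - 1, hk⟩ ⟨N - 1, hk⟩ := hGtop
      have hherm : (G (N - 1)).IsHermitian := by
        rw [hG]; exact blk_conjT hsymm _ _
      have hwinv : ∀ u : Fin d → ℝ, ∃ w : Fin N × Fin d → ℝ,
          (∀ p : Fin N × Fin d, (p.1 : ℕ) < N - 1 → w p = 0) ∧
          (∀ a, w (⟨N - 1, hk⟩, a) = u a) ∧
          (∀ p : Fin N × Fin d, N - 1 < (p.1 : ℕ) → (Q *ᵥ w) p = 0) ∧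
          (∀ a, (Q *ᵥ w) (⟨N - 1, hk⟩, a) = (G (N - 1) *ᵥ u) a) := by
        intro u
        refine ⟨eblk ⟨N - 1, hk⟩ u, ?_, ?_, ?_, ?_⟩
        · intro p hp
          have hne : p.1 ≠ (⟨N - 1, hk⟩ : Fin N) := by
            intro h
            rw [h] at hp
            simp at hp
          simp [eblk, hne]
        · intro a; simp [eblk]
        · intro p hp
          exfalso
          have := p.1.isLt
          omega
        · intro a
          rw [mulVec_eblk, hG]
      have hupperk : (qhigh • (1 : Matrix (Fin d) (Fin d) ℝ) - G (N - 1)).PosSemidef := by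
        rw [hG, ← blk_smul_one (N := N) qhigh ⟨N - 1, hk⟩, ← blk_sub]
        exact blk_posSemidef hupper _
      have hwor : ∀ u : Fin d → ℝ, ∃ w : Fin N × Fin d → ℝ,
          (∀ p : Fin N × Fin d, p.1 ≠ (⟨N - 1, hk⟩ : Fin N) → w p = 0 ∨ (Q *ᵥ w) p = 0) ∧
          (∀ a, w (⟨N - 1, hk⟩, a) = u a) ∧
          (∀ a, (Q *ᵥ w) (⟨N - 1, hk⟩, a) = (G (N - 1) *ᵥ u) a) := by
        intro u
        obtain ⟨w, h1, h2, h3, h4⟩ := hwinv u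
        refine ⟨w, ?_, h2, h4⟩
        intro p hp
        have hval : (p.1 : ℕ) ≠ N - 1 := fun h => hp (Fin.ext h)
        rcases lt_or_gt_of_ne hval with h | h
        · exact Or.inl (h1 p h)
        · exact Or.inr (h3 p h)
      have hlowerk : (G (N - 1) - qlow • (1 : Matrix (Fin d) (Fin d) ℝ)).PosSemidef :=
        lower_of_schur h0 hlower hherm ⟨N - 1, hk⟩ hwor
      have hpd : (G (N - 1)).PosDef := by
        have := Matrix.PosDef.posSemidef_add hlowerk (smul_one_posDef h0)
        simpa using this
      exact ⟨hherm, hwinv, hupperk, hlowerk, hpd⟩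
    | succ m ih =>
      intro k hk hm
      have hk1 : k + 1 < N := by omega
      obtain ⟨ihherm, ihw, ihupper, ihlower, ihpd⟩ := ih (k + 1) hk1 (by omega)
      have hG : G k = blk Q ⟨k, hk⟩ ⟨k, hk⟩ -
          blk Q ⟨k, hk⟩ ⟨k + 1, hk1⟩ * (G (k + 1))⁻¹ * blk Q ⟨k + 1, hk1⟩ ⟨k, hk⟩ :=
        hGrec k hk1
      have hdet : IsUnit (G (k + 1)).det := ihpd.det_pos.ne'.isUnit
      have hMMinv : G (k + 1) * (G (k + 1))⁻¹ = 1 := Matrix.mul_nonsing_inv _ hdet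
      have hherm : (G k).IsHermitian := by
        rw [hG]
        have h1 : (blk Q ⟨k, hk⟩ ⟨k, hk⟩).IsHermitian := blk_conjT hsymm _ _
        have h2 : (blk Q ⟨k, hk⟩ ⟨k + 1, hk1⟩ * (G (k + 1))⁻¹ *
            blk Q ⟨k + 1, hk1⟩ ⟨k, hk⟩).IsHermitian := by
          show _ᴴ = _
          rw [conjTranspose_mul, conjTranspose_mul, blk_conjT hsymm, blk_conjT hsymm,
            ihherm.inv, ← Matrix.mul_assoc]
        exact h1.sub h2
      have hwinv : ∀ u : Fin d → ℝ, ∃ w : Fin N × Fin d → ℝ,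
          (∀ p : Fin N × Fin d, (p.1 : ℕ) < k → w p = 0) ∧
          (∀ a, w (⟨k, hk⟩, a) = u a) ∧
          (∀ p : Fin N × Fin d, k < (p.1 : ℕ) → (Q *ᵥ w) p = 0) ∧
          (∀ a, (Q *ᵥ w) (⟨k, hk⟩, a) = (G k *ᵥ u) a) := by
        intro u
        set u' : Fin d → ℝ := -((G (k + 1))⁻¹ *ᵥ (blk Q ⟨k + 1, hk1⟩ ⟨k, hk⟩ *ᵥ u)) with hu'
        obtain ⟨w', hw1, hw2, hw3, hw4⟩ := ihw u'
        refine ⟨w' + eblk ⟨k, hk⟩ u, ?_, ?_, ?_, ?_⟩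
        · intro p hp
          have h1 : w' p = 0 := hw1 p (by omega)
          have h2 : p.1 ≠ (⟨k, hk⟩ : Fin N) := by
            intro h; rw [h] at hp; simp at hp
          simp [eblk, h1, h2]
        · intro a
          have h1 : w' (⟨k, hk⟩, a) = 0 := hw1 (⟨k, hk⟩, a) (by simp)
          simp [eblk, h1]
        · rintro ⟨j, a⟩ hp
          simp only at hp
          rw [mulVec_add]
          simp only [Pi.add_apply]
          rw [mulVec_eblk]
          by_cases hj : (j : ℕ) = k + 1
          · have hjeq : j = ⟨k + 1, hk1⟩ := Fin.ext hj
            have e1 : (Q *ᵥ w') (j, a) = (G (k + 1) *ᵥ u') a := by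
              rw [hjeq]; exact hw4 a
            have e2 : (blk Q j ⟨k, hk⟩ *ᵥ u) a
                = (blk Q ⟨k + 1, hk1⟩ ⟨k, hk⟩ *ᵥ u) a := by rw [hjeq]
            rw [e1, e2]
            have e3 : G (k + 1) *ᵥ u' = -(blk Q ⟨k + 1, hk1⟩ ⟨k, hk⟩ *ᵥ u) := by
              rw [hu', mulVec_neg, mulVec_mulVec, hMMinv, one_mulVec]
            rw [e3]
            simp
          · have e1 : (Q *ᵥ w') (j, a) = 0 := hw3 (j, a) (by simp; omega)
            have e2 : blk Q j ⟨k, hk⟩ = 0 := by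
              apply htri
              apply two_le_abs_sub
              right
              have h1 : ((⟨k, hk⟩ : Fin N) : ℤ) = (k : ℤ) := rfl
              have h2 : ((j : Fin N) : ℤ) = ((j : ℕ) : ℤ) := rfl
              rw [h1, h2]
              omega
            rw [e1, e2]
            simp
        · intro a
          rw [mulVec_add]
          simp only [Pi.add_apply]
          rw [mulVec_eblk]
          have e1 : (Q *ᵥ w') (⟨k, hk⟩, a) = (blk Q ⟨k, hk⟩ ⟨k + 1, hk1⟩ *ᵥ u') a := by
            rw [mulVec_expand]
            rw [Fintype.sum_eq_single (⟨k + 1, hk1⟩ : Fin N)]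
            · congr 1
              funext b
              exact hw2 b
            · intro l hl
              by_cases hlk : (l : ℕ) < k + 1
              · have hz : (fun b => w' (l, b)) = (fun _ => (0 : ℝ)) :=
                  funext fun b => hw1 (l, b) hlk
                rw [hz]
                simp [mulVec, dotProduct]
              · have hl2 : k + 2 ≤ (l : ℕ) := by
                  have : (l : ℕ) ≠ k + 1 := fun h => hl (Fin.ext h)
                  omega
                have hz : blk Q ⟨k, hk⟩ l = 0 := by
                  apply htri
                  apply two_le_abs_sub
                  left
                  have h1 : ((⟨k, hk⟩ : Fin N) : ℤ) = (k : ℤ) := rfl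
                  have h2 : ((l : Fin N) : ℤ) = ((l : ℕ) : ℤ) := rfl
                  rw [h1, h2]
                  omega
                rw [hz]
                simp
          rw [e1, hG, sub_mulVec]
          have e3 : blk Q ⟨k, hk⟩ ⟨k + 1, hk1⟩ *ᵥ u' =
              -((blk Q ⟨k, hk⟩ ⟨k + 1, hk1⟩ * (G (k + 1))⁻¹ *
                blk Q ⟨k + 1, hk1⟩ ⟨k, hk⟩) *ᵥ u) := by
            rw [hu', mulVec_neg, mulVec_mulVec, mulVec_mulVec]
          rw [e3]
          simp [Pi.sub_apply]
          ring
      have hupperk : (qhigh • (1 : Matrix (Fin d) (Fin d) ℝ) - G k).PosSemidef := by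
        have h1 : (qhigh • (1 : Matrix (Fin d) (Fin d) ℝ) -
            blk Q ⟨k, hk⟩ ⟨k, hk⟩).PosSemidef := by
          rw [← blk_smul_one (N := N) qhigh ⟨k, hk⟩, ← blk_sub]
          exact blk_posSemidef hupper _
        have h2 : (blk Q ⟨k, hk⟩ ⟨k + 1, hk1⟩ * (G (k + 1))⁻¹ *
            blk Q ⟨k + 1, hk1⟩ ⟨k, hk⟩).PosSemidef := by
          have := (ihpd.inv.posSemidef).mul_mul_conjTranspose_same
            (blk Q ⟨k, hk⟩ ⟨k + 1, hk1⟩)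
          rwa [blk_conjT hsymm] at this
        have h3 : qhigh • (1 : Matrix (Fin d) (Fin d) ℝ) - G k =
            (qhigh • (1 : Matrix (Fin d) (Fin d) ℝ) - blk Q ⟨k, hk⟩ ⟨k, hk⟩) +
            blk Q ⟨k, hk⟩ ⟨k + 1, hk1⟩ * (G (k + 1))⁻¹ * blk Q ⟨k + 1, hk1⟩ ⟨k, hk⟩ := by
          rw [hG]; abel
        rw [h3]
        exact h1.add h2
      have hwor : ∀ u : Fin d → ℝ, ∃ w : Fin N × Fin d → ℝ,
          (∀ p : Fin N × Fin d, p.1 ≠ (⟨k, hk⟩ : Fin N) → w p = 0 ∨ (Q *ᵥ w) p = 0) ∧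
          (∀ a, w (⟨k, hk⟩, a) = u a) ∧
          (∀ a, (Q *ᵥ w) (⟨k, hk⟩, a) = (G k *ᵥ u) a) := by
        intro u
        obtain ⟨w, h1, h2, h3, h4⟩ := hwinv u
        refine ⟨w, ?_, h2, h4⟩
        intro p hp
        have hval : (p.1 : ℕ) ≠ k := fun h => hp (Fin.ext h)
        rcases lt_or_gt_of_ne hval with h | h
        · exact Or.inl (h1 p h)
        · exact Or.inr (h3 p h)
      have hlowerk : (G k - qlow • (1 : Matrix (Fin d) (Fin d) ℝ)).PosSemidef :=
        lower_of_schur h0 hlower hherm ⟨k, hk⟩ hwor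
      have hpd : (G k).PosDef := by
        have := Matrix.PosDef.posSemidef_add hlowerk (smul_one_posDef h0)
        simpa using this
      exact ⟨hherm, hwinv, hupperk, hlowerk, hpd⟩
  intro k hk
  obtain ⟨_, _, hup, hlo, _⟩ := key (N - 1 - k) k hk rfl
  exact ⟨hlo, hup⟩
end
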